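/- For an odd natural number N, the discrete Fourier transform of the vector c_n = ((1−(−1)^n)/(2N))·cot(πn/(2N)) − ((1+(−1)^n)/(2N))·tan(πn/(2N)) (for n = 1, …, N−1, with c_0 = 0) satisfies ĉ_n = −i for n = 1, …, (N−1)/2, ĉ_0 = 0, and ĉ_n = i for n = (N+1)/2, …, N−1, where ĉ_k = Σ_{n=0}^{N−1} c_n e^{−2πikn/N}. -/

import Mathlib

open Complex
private lemma alg (s c e Nr : ℝ) (hs : s ≠ 0) (hc : c ≠ 0) (hN : Nr ≠ 0)
    (h1 : s ^ 2 + c ^ 2 = 1) :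
    Nr * ((1 - e) / (2 * Nr) * (c / s) - (1 + e) / (2 * Nr) * (s / c)) * (2 * s * c)
      = 2 * c ^ 2 - 1 - e := by
  field_simp
  linear_combination (-(1 + e)) * h1

private lemma cos_diff (x y a b : ℝ) (ha : (x + y) / 2 = a) (hb : (x - y) / 2 = -b) :
    Real.cos x - Real.cos y = 2 * Real.sin a * Real.sin b := by
  rw [Real.cos_sub_cos, ha, hb, Real.sin_neg]; ring

private lemma tele (θ : ℝ) (m : ℕ) :
    (∑ j ∈ Finset.range m, 2 * Real.sin ((j + 1) * θ)) * Real.sin (θ / 2)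
      = Real.cos (θ / 2) - Real.cos ((2 * m + 1) * θ / 2) := by
  induction m with
  | zero => simp
  | succ m ih =>
    rw [Finset.sum_range_succ, add_mul, ih]
    have h := cos_diff ((2 * m + 1) * θ / 2) ((2 * (m + 1 : ℕ) + 1) * θ / 2)
      ((m + 1) * θ) (θ / 2) (by push_cast; ring) (by push_cast; ring)
    push_cast at h ⊢
    linarith

private lemma real_id (N : ℕ) (hN : Odd N) (hN3 : 3 ≤ N)
    (c : ℕ → ℝ) (hc0 : c 0 = 0)
    (hc : ∀ n : ℕ, 1 ≤ n → n ≤ N - 1 →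
      c n = (1 - (-1 : ℝ) ^ n) / (2 * N)
              * (Real.cos (Real.pi * n / (2 * N)) / Real.sin (Real.pi * n / (2 * N)))
            - (1 + (-1 : ℝ) ^ n) / (2 * N) * Real.tan (Real.pi * n / (2 * N)))
    (n : ℕ) (hn : n ≤ N - 1) :
    (N : ℝ) * c n
      = ∑ j ∈ Finset.range ((N - 1) / 2), 2 * Real.sin ((j + 1) * (2 * Real.pi * n / N)) := by
  have hNR : (0 : ℝ) < N := by positivity
  rcases Nat.eq_zero_or_pos n with rfl | hn1
  · simp [hc0]
  -- n ≥ 1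
  obtain ⟨m, hm⟩ := hN
  have hm' : (N - 1) / 2 = m := by omega
  have hnN : n < N := by omega
  set a : ℝ := Real.pi * n / (2 * N) with ha
  have ha0 : 0 < a := by positivity
  have ha2 : a < Real.pi / 2 := by
    rw [ha, div_lt_div_iff₀ (by positivity) (by norm_num)]
    have : (n : ℝ) < N := by exact_mod_cast hnN
    nlinarith [Real.pi_pos]
  have hsa : Real.sin a ≠ 0 :=
    ne_of_gt (Real.sin_pos_of_pos_of_lt_pi ha0 (by linarith [Real.pi_pos]))
  have hca : Real.cos a ≠ 0 := ne_of_gt (Real.cos_pos_of_mem_Ioo ⟨by linarith, ha2⟩)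
  set θ : ℝ := 2 * Real.pi * n / N with hθ
  have hθ2 : θ / 2 = 2 * a := by rw [hθ, ha]; field_simp
  have hsθ : Real.sin (θ / 2) ≠ 0 := by
    rw [hθ2, Real.sin_two_mul]; positivity
  have key := tele θ m
  rw [hm']
  apply mul_right_cancel₀ hsθ
  rw [key]
  have hNm : ((2 * m + 1 : ℕ) : ℝ) = N := by exact_mod_cast congrArg (Nat.cast (R := ℝ)) hm.symm
  have hlast : (2 * (m : ℝ) + 1) * θ / 2 = n * Real.pi := by
    rw [hθ]
    have : (2 * (m : ℝ) + 1) = N := by push_cast at hNm ⊢; linarith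
    rw [this]; field_simp
  rw [hlast, hθ2, Real.sin_two_mul, Real.cos_two_mul]
  have hcos : Real.cos (n * Real.pi) = (-1 : ℝ) ^ n := by
    have := Real.cos_nat_mul_pi_sub 0 n
    simpa using this
  rw [hcos, hc n hn1 hn, Real.tan_eq_sin_div_cos, ← ha]
  exact alg (Real.sin a) (Real.cos a) ((-1 : ℝ) ^ n) N hsa hca (ne_of_gt hNR)
    (Real.sin_sq_add_cos_sq a)


private lemma pairterm (x : ℝ) : -Complex.I * Complex.exp ((x:ℂ) * Complex.I)
    + Complex.I * Complex.exp (-(x:ℂ) * Complex.I) = ((2 * Real.sin x : ℝ) : ℂ) := by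
  push_cast
  rw [Complex.sin]; ring

private lemma complex_id (N : ℕ) (hN : Odd N) (n : ℕ) (hnN : n < N)
    (S : ℝ) (hS : (N : ℝ) * S
      = ∑ j ∈ Finset.range ((N - 1) / 2), 2 * Real.sin ((j + 1) * (2 * Real.pi * n / N))) :
    ∑ j ∈ Finset.range N,
        (if j = 0 then 0 else if j ≤ (N - 1) / 2 then -Complex.I else Complex.I)
          * Complex.exp (2 * Real.pi * Complex.I * j * n / N)
      = (N : ℂ) * (S : ℂ) := by
  obtain ⟨m, hm⟩ := hN
  have hm' : (N - 1) / 2 = m := by omega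
  have hNC : (N : ℂ) = 2 * (m : ℂ) + 1 := by exact_mod_cast congrArg (Nat.cast (R := ℂ)) hm
  have hN0 : (N : ℂ) ≠ 0 := Nat.cast_ne_zero.mpr (by omega)
  rw [hm'] at hS
  simp only [hm']
  have hrange : Finset.range N = Finset.range (m + m + 1) := by
    rw [show N = m + m + 1 by omega]
  rw [hrange, Finset.sum_range_succ', Finset.sum_range_add,
    if_pos rfl, zero_mul, add_zero]
  rw [← Finset.sum_range_reflect
    (fun j => (if m + j + 1 = 0 then 0 else if m + j + 1 ≤ m then -Complex.I else Complex.I)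
      * Complex.exp (2 * Real.pi * Complex.I * (↑(m + j + 1)) * n / N)) m]
  rw [← Finset.sum_add_distrib]
  have hterm : ∀ j ∈ Finset.range m,
      ((if j + 1 = 0 then 0 else if j + 1 ≤ m then -Complex.I else Complex.I)
          * Complex.exp (2 * Real.pi * Complex.I * (↑(j + 1)) * n / N)
        + (if m + (m - 1 - j) + 1 = 0 then 0
            else if m + (m - 1 - j) + 1 ≤ m then -Complex.I else Complex.I)
          * Complex.exp (2 * Real.pi * Complex.I * (↑(m + (m - 1 - j) + 1)) * n / N))
      = ((2 * Real.sin ((j + 1) * (2 * Real.pi * n / N)) : ℝ) : ℂ) := by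
    intro j hj
    rw [Finset.mem_range] at hj
    have hj1 : j + 1 ≤ m := by omega
    have hidx : m + (m - 1 - j) + 1 = 2 * m - j := by omega
    rw [if_neg (by omega), if_pos hj1, hidx, if_neg (by omega), if_neg (by omega)]
    set x : ℝ := (j + 1) * (2 * Real.pi * n / N) with hx
    have e1 : (2 * (Real.pi:ℂ) * Complex.I * (↑(j + 1)) * n / N) = (x : ℂ) * Complex.I := by
      rw [hx]; push_cast; ring
    have e2 : (2 * (Real.pi:ℂ) * Complex.I * (↑(2 * m - j)) * n / N)
        = (n : ℂ) * (2 * Real.pi * Complex.I) + (-(x : ℂ)) * Complex.I := by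
      rw [Nat.cast_sub (by omega : j ≤ 2 * m), hx]
      push_cast
      field_simp
      linear_combination (-(n:ℂ)) * hNC
    rw [e1, e2, Complex.exp_add, Complex.exp_nat_mul_two_pi_mul_I, one_mul]
    exact pairterm x
  rw [Finset.sum_congr rfl hterm, ← Complex.ofReal_sum, ← hS]
  push_cast
  ring


private lemma ortho (N : ℕ) (hN0 : 0 < N) (j k : ℕ) (hj : j < N) (hk : k < N) :
    ∑ n ∈ Finset.range N,
        Complex.exp (2 * Real.pi * Complex.I * j * n / N)
          * Complex.exp (-(2 * Real.pi * Complex.I * k * n) / N)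
      = if j = k then (N : ℂ) else 0 := by
  have hNne : (N : ℂ) ≠ 0 := Nat.cast_ne_zero.mpr (by omega)
  have h2πI : (2 * (Real.pi : ℂ) * Complex.I) ≠ 0 := by
    simp [Real.pi_ne_zero, Complex.I_ne_zero]
  set z : ℂ := Complex.exp (2 * Real.pi * Complex.I * ((j : ℂ) - k) / N) with hz
  have hterm : ∀ n ∈ Finset.range N,
      Complex.exp (2 * Real.pi * Complex.I * j * n / N)
        * Complex.exp (-(2 * Real.pi * Complex.I * k * n) / N) = z ^ n := by
    intro n _
    rw [hz, ← Complex.exp_nat_mul, ← Complex.exp_add]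
    congr 1
    field_simp
    ring
  rw [Finset.sum_congr rfl hterm]
  by_cases hjk : j = k
  · subst hjk
    have : z = 1 := by rw [hz]; simp
    simp [this]
  · rw [if_neg hjk]
    have hz1 : z ≠ 1 := by
      intro h
      obtain ⟨t, ht⟩ := Complex.exp_eq_one_iff.mp (hz ▸ h)
      have h2 : ((j : ℂ) - k) * (2 * (Real.pi : ℂ) * Complex.I)
          = ((t : ℂ) * N) * (2 * (Real.pi : ℂ) * Complex.I) := by
        field_simp at ht
        linear_combination (2 * (Real.pi:ℂ) * Complex.I) * ht
      have h3 : ((j : ℂ) - k) = (t : ℂ) * N := mul_right_cancel₀ h2πI h2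
      have h4 : (j : ℤ) - k = t * N := by exact_mod_cast h3
      have ht0 : t = 0 := by
        by_contra h
        have h1 : 1 ≤ |t| := Int.one_le_abs (by omega)
        have h5 : (N : ℤ) ≤ |t| * N :=
          le_mul_of_one_le_left (by positivity) h1
        have habs : |(j : ℤ) - k| = |t| * N := by
          rw [h4, abs_mul, abs_of_nonneg (by positivity : (0:ℤ) ≤ (N:ℤ))]
        have h6 : |(j : ℤ) - k| < N := abs_lt.mpr ⟨by omega, by omega⟩
        linarith
      rw [ht0] at h4
      exact hjk (by omega)
    have hzN : z ^ N = 1 := by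
      rw [hz, ← Complex.exp_nat_mul]
      have harg : (N : ℂ) * (2 * Real.pi * Complex.I * ((j : ℂ) - k) / N)
          = (((j : ℤ) - k : ℤ) : ℂ) * (2 * Real.pi * Complex.I) := by
        push_cast
        field_simp
      rw [harg, Complex.exp_int_mul_two_pi_mul_I]
    rw [geom_sum_eq hz1, hzN]
    simp

theorem stmt_16 (N : ℕ) (hN : Odd N) (hN3 : 3 ≤ N)
    (c : ℕ → ℝ) (hc0 : c 0 = 0)
    (hc : ∀ n : ℕ, 1 ≤ n → n ≤ N - 1 →
      c n = (1 - (-1 : ℝ) ^ n) / (2 * N)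
              * (Real.cos (Real.pi * n / (2 * N)) / Real.sin (Real.pi * n / (2 * N)))
            - (1 + (-1 : ℝ) ^ n) / (2 * N) * Real.tan (Real.pi * n / (2 * N))) :
    ∀ k : ℕ, k ≤ N - 1 →
      (∑ n ∈ Finset.range N, (c n : ℂ)
          * Complex.exp (-(2 * Real.pi * Complex.I * k * n) / N))
        = if k = 0 then 0 else if k ≤ (N - 1) / 2 then -Complex.I else Complex.I := by
  intro k hk
  have hkN : k < N := by omega
  have hNne : (N : ℂ) ≠ 0 := Nat.cast_ne_zero.mpr (by omega)
  have hcid : ∀ n ∈ Finset.range N, (c n : ℂ)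
      = (N : ℂ)⁻¹ * ∑ j ∈ Finset.range N,
          (if j = 0 then 0 else if j ≤ (N - 1) / 2 then -Complex.I else Complex.I)
            * Complex.exp (2 * Real.pi * Complex.I * j * n / N) := by
    intro n hn
    rw [Finset.mem_range] at hn
    rw [complex_id N hN n hn (c n) (real_id N hN hN3 c hc0 hc n (by omega)),
      inv_mul_cancel_left₀ hNne]
  calc ∑ n ∈ Finset.range N, (c n : ℂ)
          * Complex.exp (-(2 * Real.pi * Complex.I * k * n) / N)
      = ∑ n ∈ Finset.range N, ∑ j ∈ Finset.range N, (N : ℂ)⁻¹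
          * ((if j = 0 then 0 else if j ≤ (N - 1) / 2 then -Complex.I else Complex.I)
            * (Complex.exp (2 * Real.pi * Complex.I * j * n / N)
              * Complex.exp (-(2 * Real.pi * Complex.I * k * n) / N))) := by
        refine Finset.sum_congr rfl fun n hn => ?_
        rw [hcid n hn, mul_assoc, Finset.sum_mul, Finset.mul_sum]
        simp only [mul_assoc]
    _ = ∑ j ∈ Finset.range N, ∑ n ∈ Finset.range N, (N : ℂ)⁻¹
          * ((if j = 0 then 0 else if j ≤ (N - 1) / 2 then -Complex.I else Complex.I)
            * (Complex.exp (2 * Real.pi * Complex.I * j * n / N)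
              * Complex.exp (-(2 * Real.pi * Complex.I * k * n) / N))) := Finset.sum_comm
    _ = ∑ j ∈ Finset.range N, (N : ℂ)⁻¹
          * ((if j = 0 then 0 else if j ≤ (N - 1) / 2 then -Complex.I else Complex.I)
            * (if j = k then (N : ℂ) else 0)) := by
        refine Finset.sum_congr rfl fun j hj => ?_
        rw [← Finset.mul_sum, ← Finset.mul_sum,
          ortho N (by omega) j k (Finset.mem_range.mp hj) hkN]
    _ = if k = 0 then 0 else if k ≤ (N - 1) / 2 then -Complex.I else Complex.I := by
        rw [Finset.sum_eq_single_of_mem k (Finset.mem_range.mpr hkN)]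
        · rw [if_pos rfl, mul_comm _ ((N:ℂ)), ← mul_assoc, inv_mul_cancel₀ hNne, one_mul]
        · intro j _ hjk
          rw [if_neg hjk, mul_zero, mul_zero]
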